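/- Let H be a finite-dimensional complex inner product space, let U, W, V be unitary operators on H, let {e_i} be an orthonormal eigenbasis of W and {f_k} an orthonormal eigenbasis of V, and let ρ be a density operator on H. Then for every fixed index i₃, marginalizing the combined quantum amplitude over all other indices yields a probability: Σ_{i₂,k₁,k₂} Ã_ρ(i₂,i₃,k₁,k₂) = ⟨e_{i₃}, (U ∘ ρ ∘ U†) e_{i₃}⟩, which is a real number lying in the interval [0, 1]. -/

import Mathlib

open scoped InnerProductSpace
open ContinuousLinearMap

private lemma trace_eq_sum_inner' {H : Type*} [NormedAddCommGroup H] [InnerProductSpace ℂ H]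
    [FiniteDimensional ℂ H] {I : Type*} [Fintype I]
    (e : OrthonormalBasis I ℂ H) (T : H →ₗ[ℂ] H) :
    LinearMap.trace ℂ H T = ∑ i, ⟪e i, T (e i)⟫_ℂ := by
  classical
  rw [LinearMap.trace_eq_matrix_trace ℂ e.toBasis, Matrix.trace]
  simp [Matrix.diag, LinearMap.toMatrix_apply, OrthonormalBasis.coe_toBasis_repr_apply,
    OrthonormalBasis.repr_apply_apply]

/-- **Marginalizing `Ã_ρ` over all indices except `i₃` yields a probability:**
`∑_{i₂,k₁,k₂} Ã_ρ(i₂,i₃,k₁,k₂) = ⟨e_{i₃}, (U ∘ ρ ∘ U†) e_{i₃}⟩`,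
a real number in `[0,1]`. -/
theorem combined_amplitude_marginal_i₃
    {H : Type*} [NormedAddCommGroup H] [InnerProductSpace ℂ H] [FiniteDimensional ℂ H]
    {I K : Type*} [Fintype I] [Fintype K]
    (U W V ρ : H →L[ℂ] H)
    (hU : U ∈ unitary (H →L[ℂ] H))
    (hW : W ∈ unitary (H →L[ℂ] H))
    (hV : V ∈ unitary (H →L[ℂ] H))
    (e : OrthonormalBasis I ℂ H) (f : OrthonormalBasis K ℂ H)
    (hWe : ∀ i, ∃ c : ℂ, W (e i) = c • e i)
    (hVf : ∀ k, ∃ c : ℂ, V (f k) = c • f k)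
    (hρpos : ρ.IsPositive)
    (hρtr : LinearMap.trace ℂ H ρ.toLinearMap = 1)
    (i₃ : I) :
    (∑ i₂ : I, ∑ k₁ : K, ∑ k₂ : K,
      ⟪e i₃, U (f k₂)⟫_ℂ * ⟪f k₂, (adjoint U) (e i₂)⟫_ℂ *
        ⟪e i₂, U (f k₁)⟫_ℂ * ⟪f k₁, ρ ((adjoint U) (e i₃))⟫_ℂ
      = ⟪e i₃, (U ∘L ρ ∘L adjoint U) (e i₃)⟫_ℂ)
    ∧ (⟪e i₃, (U ∘L ρ ∘L adjoint U) (e i₃)⟫_ℂ).im = 0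
    ∧ (⟪e i₃, (U ∘L ρ ∘L adjoint U) (e i₃)⟫_ℂ).re ∈ Set.Icc (0 : ℝ) 1 := by
  classical
  set σ : H →L[ℂ] H := U ∘L ρ ∘L adjoint U with hσdef
  have hUadj : U ∘L adjoint U = 1 := by
    rw [← star_eq_adjoint]; exact hU.2
  have hUadj' : adjoint U ∘L U = 1 := by
    rw [← star_eq_adjoint]; exact hU.1
  have hUU : ∀ x : H, U (adjoint U x) = x := by
    intro x
    have := congrArg (fun T : H →L[ℂ] H => T x) hUadj
    simpa using this
  -- positivity of σ
  have hσ : σ.IsPositive := hρpos.conj_adjoint U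
  -- each diagonal entry real and nonneg
  have hreal : ∀ i : I, (⟪e i, σ (e i)⟫_ℂ).im = 0 := by
    intro i
    have hsym := hσ.1
    have : (starRingEnd ℂ) ⟪e i, σ (e i)⟫_ℂ = ⟪e i, σ (e i)⟫_ℂ := by
      rw [inner_conj_symm]
      exact hsym (e i) (e i)
    exact Complex.conj_eq_iff_im.mp this
  have hnonneg : ∀ i : I, 0 ≤ (⟪e i, σ (e i)⟫_ℂ).re := fun i => by
    simpa using (Complex.le_def.mp (hσ.inner_nonneg_right (e i))).1
  -- trace of σ is 1
  have htr : LinearMap.trace ℂ H σ.toLinearMap = 1 := by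
    have hc : σ.toLinearMap =
        (U.toLinearMap ∘ₗ ρ.toLinearMap) ∘ₗ (adjoint U).toLinearMap := by
      ext x; simp [hσdef]
    rw [hc]
    have := LinearMap.trace_mul_comm ℂ (U.toLinearMap ∘ₗ ρ.toLinearMap) (adjoint U).toLinearMap
    rw [Module.End.mul_eq_comp] at this
    rw [this, Module.End.mul_eq_comp]
    have hid : (adjoint U).toLinearMap ∘ₗ (U.toLinearMap ∘ₗ ρ.toLinearMap)
        = ρ.toLinearMap := by
      ext x
      simp only [LinearMap.comp_apply, ContinuousLinearMap.coe_coe]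
      have := congrArg (fun T : H →L[ℂ] H => T (ρ x)) hUadj'
      simpa using this
    rw [hid, hρtr]
  have hsum1 : ∑ i, (⟪e i, σ (e i)⟫_ℂ).re = 1 := by
    have := trace_eq_sum_inner' e σ.toLinearMap
    rw [htr] at this
    have hre := congrArg Complex.re this.symm
    simpa [Complex.re_sum] using hre
  refine ⟨?_, hreal i₃, hnonneg i₃, ?_⟩
  · -- the sum computation
    have h2 : ∀ i₂ : I, ∑ k₂ : K, ⟪e i₃, U (f k₂)⟫_ℂ * ⟪f k₂, (adjoint U) (e i₂)⟫_ℂ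
        = ⟪e i₃, e i₂⟫_ℂ := by
      intro i₂
      have h := f.sum_inner_mul_inner (adjoint U (e i₃)) (adjoint U (e i₂))
      simp only [ContinuousLinearMap.adjoint_inner_left] at h
      rw [h, hUU]
    have h3 : ∀ i₂ : I, ∑ k₁ : K, ⟪e i₂, U (f k₁)⟫_ℂ * ⟪f k₁, ρ ((adjoint U) (e i₃))⟫_ℂ
        = ⟪e i₂, σ (e i₃)⟫_ℂ := by
      intro i₂
      have h := f.sum_inner_mul_inner (adjoint U (e i₂)) (ρ (adjoint U (e i₃)))
      simp only [ContinuousLinearMap.adjoint_inner_left] at h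
      rw [h]
      simp [hσdef]
    calc ∑ i₂ : I, ∑ k₁ : K, ∑ k₂ : K,
          ⟪e i₃, U (f k₂)⟫_ℂ * ⟪f k₂, (adjoint U) (e i₂)⟫_ℂ *
            ⟪e i₂, U (f k₁)⟫_ℂ * ⟪f k₁, ρ ((adjoint U) (e i₃))⟫_ℂ
        = ∑ i₂ : I, ⟪e i₃, e i₂⟫_ℂ * ⟪e i₂, σ (e i₃)⟫_ℂ := by
          refine Finset.sum_congr rfl fun i₂ _ => ?_
          rw [← h2 i₂, ← h3 i₂, Finset.sum_mul_sum, Finset.sum_comm]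
          refine Finset.sum_congr rfl fun k₁ _ => Finset.sum_congr rfl fun k₂ _ => by ring
      _ = ⟪e i₃, σ (e i₃)⟫_ℂ := e.sum_inner_mul_inner (e i₃) (σ (e i₃))
  · -- upper bound
    calc (⟪e i₃, σ (e i₃)⟫_ℂ).re
        ≤ ∑ i, (⟪e i, σ (e i)⟫_ℂ).re :=
          Finset.single_le_sum (fun i _ => hnonneg i) (Finset.mem_univ i₃)
      _ = 1 := hsum1
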